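/- Let $m \geq 2$, $B = \langle h_0, t \mid t^{-1}h_0t = h_0^{m+1}\rangle$, $H = \langle h_0 \rangle$, $K$ a commutative ring with $m+1 \in K^*$, and $V = K[B/H]$ with basis point $v = H$. Then the maps $\alpha, \beta: V \to V$ determined by $\alpha(v) = tv$ and $\beta(v) = (\sum_{0 \leq j \leq m} h_0^j) t^{-1} v$ are well-defined $KB$-module endomorphisms of $V$, and $\alpha\beta(v) = (m+1)v$. -/

import Mathlib

open Finsupp SemidirectProduct

/-- The permutation action of `b : B` on the free `A`-module `X →₀ A` on a `B`-set `X`. -/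
def permAct {B : Type*} [Group B] {X : Type*} [MulAction B X] {A : Type*} [AddCommGroup A]
    (b : B) : (X →₀ A) ≃+ (X →₀ A) :=
  Finsupp.domCongr (MulAction.toPerm b)

lemma permAct_apply {B : Type*} [Group B] {X : Type*} [MulAction B X] {A : Type*}
    [AddCommGroup A] (b : B) (f : X →₀ A) (x : X) : permAct b f x = f (b⁻¹ • x) := by
  simp [permAct, Finsupp.domCongr, Finsupp.equivMapDomain, MulAction.toPerm]

def BSrel (m : ℕ) : Set (FreeGroup Bool) :=
  {(FreeGroup.of true)⁻¹ * FreeGroup.of false * FreeGroup.of true *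
    ((FreeGroup.of false) ^ (m + 1))⁻¹}

/-- The Baumslag–Solitar group `BS(1, m+1) = ⟨h₀, t | t⁻¹h₀t = h₀^(m+1)⟩`. -/
abbrev BS (m : ℕ) : Type := PresentedGroup (BSrel m)

/-- The generator `h₀`. -/
def bsH0 (m : ℕ) : BS m := PresentedGroup.of false

/-- The generator `t`. -/
def bsT (m : ℕ) : BS m := PresentedGroup.of true

/-- The cyclic subgroup `H = ⟨h₀⟩`. -/
def bsH (m : ℕ) : Subgroup (BS m) := Subgroup.zpowers (bsH0 m)


lemma bs_rel (m : ℕ) : (bsT m)⁻¹ * bsH0 m * bsT m = bsH0 m ^ (m + 1) := by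
  have h : PresentedGroup.mk (BSrel m)
      ((FreeGroup.of true)⁻¹ * FreeGroup.of false * FreeGroup.of true *
        ((FreeGroup.of false) ^ (m + 1))⁻¹) = 1 := by
    apply (QuotientGroup.eq_one_iff _).mpr
    exact Subgroup.subset_normalClosure rfl
  simpa [bsT, bsH0, PresentedGroup.of, map_mul, map_inv, map_pow, mul_inv_eq_one] using h

lemma bs_conj (m : ℕ) (q : ℤ) :
    bsT m * (bsH0 m) ^ ((m + 1 : ℤ) * q) * (bsT m)⁻¹ = (bsH0 m) ^ q := by
  have h0 : (bsH0 m) ^ ((m + 1 : ℤ)) = (bsT m)⁻¹ * bsH0 m * bsT m := by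
    rw [bs_rel]; norm_cast
  calc bsT m * (bsH0 m) ^ ((m+1:ℤ) * q) * (bsT m)⁻¹
      = bsT m * ((bsH0 m) ^ ((m+1:ℤ)))^q * (bsT m)⁻¹ := by rw [zpow_mul]
    _ = bsT m * ((bsT m)⁻¹ * bsH0 m * ((bsT m)⁻¹)⁻¹)^q * (bsT m)⁻¹ := by rw [h0, inv_inv]
    _ = bsT m * ((bsT m)⁻¹ * (bsH0 m)^q * ((bsT m)⁻¹)⁻¹) * (bsT m)⁻¹ := by rw [conj_zpow]
    _ = (bsH0 m)^q := by group

lemma bs_conj' (m : ℕ) (q : ℤ) :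
    (bsT m)⁻¹ * bsH0 m ^ q * bsT m = bsH0 m ^ ((m + 1 : ℤ) * q) := by
  rw [← bs_conj m q]; group

lemma bs_coset (m : ℕ) (b : BS m) (z z' : ℤ) (h : (m + 1 : ℤ) ∣ z - z') :
    ((b * bsH0 m ^ z * (bsT m)⁻¹ : BS m) : BS m ⧸ bsH m)
      = ((b * bsH0 m ^ z' * (bsT m)⁻¹ : BS m) : BS m ⧸ bsH m) := by
  obtain ⟨q, hq⟩ := h
  refine QuotientGroup.eq.mpr ?_
  have key : (b * bsH0 m ^ z * (bsT m)⁻¹)⁻¹ * (b * bsH0 m ^ z' * (bsT m)⁻¹)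
      = bsT m * bsH0 m ^ ((m + 1 : ℤ) * (-q)) * (bsT m)⁻¹ := by
    have hzz : (m + 1 : ℤ) * -q = z' - z := by rw [← neg_sub z z', hq]; ring
    rw [hzz]
    group
  rw [key, bs_conj]
  exact ⟨-q, rfl⟩

lemma rot_sum {M : Type*} [AddCommGroup M] (n : ℕ) (f : ℕ → M) (hf : f n = f 0) :
    ∑ j ∈ Finset.range n, f (j + 1) = ∑ j ∈ Finset.range n, f j := by
  have h1 := Finset.sum_range_succ' f n
  have h2 := Finset.sum_range_succ f n
  have h3 := h1.symm.trans h2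
  rw [hf] at h3
  exact add_right_cancel h3

lemma shift_sum {M : Type*} [AddCommGroup M] (n : ℕ) (c : ℤ → M)
    (hc : ∀ z : ℤ, c (z + n) = c z) (k : ℤ) :
    ∑ j ∈ Finset.range n, c (k + j) = ∑ j ∈ Finset.range n, c j := by
  induction k using Int.induction_on with
  | zero => simp
  | succ k ih =>
      have hr := rot_sum n (fun j => c (k + j)) (by simpa using hc k)
      calc ∑ j ∈ Finset.range n, c ((k + 1 : ℤ) + j)
          = ∑ j ∈ Finset.range n, c (k + (j + 1 : ℕ)) := by
            apply Finset.sum_congr rfl; intros; congr 1; push_cast; ring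
        _ = ∑ j ∈ Finset.range n, c (k + j) := hr
        _ = _ := ih
  | pred k ih =>
      have hr := rot_sum n (fun j => c (-k - 1 + j)) (by simpa using hc (-k - 1))
      have h1 : ∑ j ∈ Finset.range n, c (-k - 1 + (j + 1 : ℕ))
          = ∑ j ∈ Finset.range n, c (-k - 1 + j) := hr
      have h2 : ∑ j ∈ Finset.range n, c (-k - 1 + (j + 1 : ℕ))
          = ∑ j ∈ Finset.range n, c (-k + j) := by
        apply Finset.sum_congr rfl; intros; congr 1; push_cast; ring
      calc ∑ j ∈ Finset.range n, c (-k - 1 + j)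
          = ∑ j ∈ Finset.range n, c (-k + j) := by rw [← h1, h2]
        _ = _ := ih


lemma permAct_single {B : Type*} [Group B] {X : Type*} [MulAction B X] {A : Type*}
    [AddCommGroup A] (b : B) (x : X) (c : A) :
    permAct b (Finsupp.single x c) = Finsupp.single (b • x) c := by
  simp [permAct, Finsupp.domCongr_apply, Finsupp.equivMapDomain_single, MulAction.toPerm]

lemma permAct_smulK {B : Type*} [Group B] {X : Type*} [MulAction B X] {K : Type*}
    [CommRing K] (b : B) (c : K) (f : X →₀ K) :
    permAct b (c • f) = c • permAct b f := by
  ext y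
  simp [permAct, Finsupp.domCongr_apply, MulAction.toPerm]

noncomputable def gAlpha (m : ℕ) (K : Type*) [CommRing K] :
    (BS m ⧸ bsH m) → ((BS m ⧸ bsH m) →₀ K) := fun x =>
  Finsupp.single
    (Quotient.map' (· * bsT m) (by
      intro a b h
      rw [QuotientGroup.leftRel_apply] at h ⊢
      obtain ⟨k, hk⟩ := Subgroup.mem_zpowers_iff.mp h
      refine Subgroup.mem_zpowers_iff.mpr ⟨(m + 1 : ℤ) * k, ?_⟩
      rw [← bs_conj' m k, hk]
      group) x) 1

lemma gAlpha_mk (m : ℕ) (K : Type*) [CommRing K] (b : BS m) :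
    gAlpha m K (b : BS m ⧸ bsH m) = Finsupp.single ((b * bsT m : BS m) : BS m ⧸ bsH m) 1 := rfl

noncomputable def gBeta (m : ℕ) (K : Type*) [CommRing K] :
    (BS m ⧸ bsH m) → ((BS m ⧸ bsH m) →₀ K) := fun x =>
  Quotient.liftOn' x
    (fun b => ∑ j ∈ Finset.range (m + 1),
      Finsupp.single (((b * bsH0 m ^ (j : ℤ) * (bsT m)⁻¹ : BS m) : BS m ⧸ bsH m)) (1 : K))
    (by
      intro a b h
      obtain ⟨k, hk⟩ := Subgroup.mem_zpowers_iff.mp (QuotientGroup.leftRel_apply.mp h)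
      have hb : b = a * bsH0 m ^ k := by rw [hk]; group
      subst hb
      have hper : ∀ z : ℤ,
          (Finsupp.single (((a * bsH0 m ^ (z + (m + 1 : ℕ)) * (bsT m)⁻¹ : BS m) : BS m ⧸ bsH m)) (1 : K))
            = Finsupp.single (((a * bsH0 m ^ z * (bsT m)⁻¹ : BS m) : BS m ⧸ bsH m)) (1 : K) := by
        intro z
        congr 1
        apply bs_coset
        push_cast
        ring_nf
        exact ⟨1, by ring⟩
      have := shift_sum (m + 1)
        (fun z => Finsupp.single (((a * bsH0 m ^ z * (bsT m)⁻¹ : BS m) : BS m ⧸ bsH m)) (1 : K))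
        hper k
      calc (∑ j ∈ Finset.range (m + 1),
            Finsupp.single (((a * bsH0 m ^ (j : ℤ) * (bsT m)⁻¹ : BS m) : BS m ⧸ bsH m)) (1 : K))
          = ∑ j ∈ Finset.range (m + 1),
            Finsupp.single (((a * bsH0 m ^ (k + j) * (bsT m)⁻¹ : BS m) : BS m ⧸ bsH m)) (1 : K) :=
            this.symm
        _ = ∑ j ∈ Finset.range (m + 1),
            Finsupp.single (((a * bsH0 m ^ k * bsH0 m ^ (j : ℤ) * (bsT m)⁻¹ : BS m) : BS m ⧸ bsH m)) (1 : K) := by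
            apply Finset.sum_congr rfl; intros; congr 2; rw [zpow_add]; group
        )

lemma gBeta_mk (m : ℕ) (K : Type*) [CommRing K] (b : BS m) :
    gBeta m K (b : BS m ⧸ bsH m) = ∑ j ∈ Finset.range (m + 1),
      Finsupp.single (((b * bsH0 m ^ (j : ℤ) * (bsT m)⁻¹ : BS m) : BS m ⧸ bsH m)) (1 : K) := rfl

lemma gAlpha_equiv (m : ℕ) (K : Type*) [CommRing K] (b : BS m) (x : BS m ⧸ bsH m) :
    gAlpha m K (b • x) = permAct b (gAlpha m K x) := by
  induction x using QuotientGroup.induction_on with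
  | H c =>
      rw [show b • ((c : BS m ⧸ bsH m)) = ((b * c : BS m) : BS m ⧸ bsH m) from rfl,
        gAlpha_mk, gAlpha_mk, permAct_single]
      congr 1
      rw [show b • (((c * bsT m : BS m)) : BS m ⧸ bsH m) = ((b * (c * bsT m) : BS m) : BS m ⧸ bsH m) from rfl,
        mul_assoc]

lemma gBeta_equiv (m : ℕ) (K : Type*) [CommRing K] (b : BS m) (x : BS m ⧸ bsH m) :
    gBeta m K (b • x) = permAct b (gBeta m K x) := by
  induction x using QuotientGroup.induction_on with
  | H c =>
      rw [show b • ((c : BS m ⧸ bsH m)) = ((b * c : BS m) : BS m ⧸ bsH m) from rfl,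
        gBeta_mk, gBeta_mk, map_sum]
      apply Finset.sum_congr rfl
      intro j _
      rw [permAct_single]
      congr 1
      rw [show b • (((c * bsH0 m ^ (j:ℤ) * (bsT m)⁻¹ : BS m)) : BS m ⧸ bsH m)
          = ((b * (c * bsH0 m ^ (j:ℤ) * (bsT m)⁻¹) : BS m) : BS m ⧸ bsH m) from rfl]
      congr 1
      group

lemma total_equiv (m : ℕ) (K : Type*) [CommRing K]
    (g : (BS m ⧸ bsH m) → ((BS m ⧸ bsH m) →₀ K))
    (hg : ∀ (b : BS m) (x : BS m ⧸ bsH m), g (b • x) = permAct b (g x))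
    (b : BS m) (f : (BS m ⧸ bsH m) →₀ K) :
    Finsupp.linearCombination K g (permAct b f) = permAct b (Finsupp.linearCombination K g f) := by
  induction f using Finsupp.induction_linear with
  | zero => simp
  | add f₁ f₂ h₁ h₂ => rw [map_add, map_add, h₁, h₂, map_add, map_add]
  | single x c =>
      rw [permAct_single, Finsupp.linearCombination_single, Finsupp.linearCombination_single,
        hg, permAct_smulK]


/-- The explicit `KB`-endomorphisms `α, β` of `V = K[B/H]` (for `B = BS(1,m+1)`, `H = ⟨h₀⟩`)
with `α(v) = t·v`, `β(v) = (∑_{j=0}^m h₀ʲ)·t⁻¹·v` are well defined, and `αβ(v) = (m+1)·v`. -/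
theorem statement_19 (m : ℕ) (hm : 2 ≤ m) (K : Type*) [CommRing K]
    (hK : IsUnit ((m : K) + 1)) :
    ∃ α β : ((BS m ⧸ bsH m) →₀ K) →ₗ[K] ((BS m ⧸ bsH m) →₀ K),
      (∀ (b : BS m) (f : (BS m ⧸ bsH m) →₀ K), α (permAct b f) = permAct b (α f)) ∧
      (∀ (b : BS m) (f : (BS m ⧸ bsH m) →₀ K), β (permAct b f) = permAct b (β f)) ∧
      α (Finsupp.single ((1 : BS m) : BS m ⧸ bsH m) (1 : K)) =
        permAct (bsT m) (Finsupp.single ((1 : BS m) : BS m ⧸ bsH m) (1 : K)) ∧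
      β (Finsupp.single ((1 : BS m) : BS m ⧸ bsH m) (1 : K)) =
        ∑ j ∈ Finset.range (m + 1),
          permAct (bsH0 m ^ j * (bsT m)⁻¹)
            (Finsupp.single ((1 : BS m) : BS m ⧸ bsH m) (1 : K)) ∧
      α (β (Finsupp.single ((1 : BS m) : BS m ⧸ bsH m) (1 : K))) =
        (m + 1 : K) • Finsupp.single ((1 : BS m) : BS m ⧸ bsH m) (1 : K) := by
  classical
  refine ⟨Finsupp.linearCombination K (gAlpha m K), Finsupp.linearCombination K (gBeta m K),
    total_equiv m K _ (gAlpha_equiv m K), total_equiv m K _ (gBeta_equiv m K), ?_, ?_, ?_⟩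
  · rw [Finsupp.linearCombination_single, one_smul, gAlpha_mk, permAct_single]
    congr 1
  · rw [Finsupp.linearCombination_single, one_smul, gBeta_mk]
    apply Finset.sum_congr rfl
    intro j _
    rw [permAct_single]
    congr 1
    rw [show (bsH0 m ^ j * (bsT m)⁻¹) • (((1 : BS m)) : BS m ⧸ bsH m)
        = ((bsH0 m ^ j * (bsT m)⁻¹ * 1 : BS m) : BS m ⧸ bsH m) from rfl]
    simp [zpow_natCast]
  · rw [Finsupp.linearCombination_single, one_smul, gBeta_mk, map_sum]
    have step : ∀ j ∈ Finset.range (m + 1),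
        Finsupp.linearCombination K (gAlpha m K)
          (Finsupp.single (((1 : BS m) * bsH0 m ^ (j : ℤ) * (bsT m)⁻¹ : BS m) : BS m ⧸ bsH m) (1 : K))
        = Finsupp.single ((1 : BS m) : BS m ⧸ bsH m) (1 : K) := by
      intro j _
      rw [Finsupp.linearCombination_single, one_smul, gAlpha_mk]
      congr 1
      have : ((1 : BS m) * bsH0 m ^ (j : ℤ) * (bsT m)⁻¹ * bsT m) = bsH0 m ^ (j : ℤ) := by group
      rw [this]
      exact QuotientGroup.eq.mpr (Subgroup.mem_zpowers_iff.mpr ⟨-(j : ℤ), by group⟩)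
    rw [Finset.sum_congr rfl step, Finset.sum_const, Finset.card_range]
    have : ((m : K) + 1) = ((m + 1 : ℕ) : K) := by push_cast; ring
    rw [this, Nat.cast_smul_eq_nsmul]
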